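/- There exist a finite poset (P, ⪯) with a minimum element ⊥ and a maximum element ⊤ with ⊥ ≠ ⊤, and a map r : E → P × P, written r(e) = (e⁺, e⁻), with e⁺ ⪯ e⁻ for every e ∈ E, such that 𝒮 (with each tuple identified with its corresponding q-element subset of E) equals { sup_r(I) : I an ideal of P* }, where P* is P with ⊥ and ⊤ removed and sup_r(I) := { e ∈ E : e⁺ ∈ I ∪ {⊥} and e⁻ ∉ I ∪ {⊥} }. In particular, every member of 𝒮 is a subset of E of size exactly q. -/

import Mathlib

/-- An ideal (downward closed subset) of the poset `P*` obtained from `(P, le)` by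
removing its minimum element `bot` and maximum element `top`. -/
def IsIdealRel {P : Type*} (le : P → P → Prop) (bot top : P) (I : Set P) : Prop :=
  (∀ x ∈ I, x ≠ bot ∧ x ≠ top) ∧ ∀ u v : P, v ∈ I → le u v → u ≠ bot → u ∈ I

open Classical in
/-- componentwise sup' of a nonempty finset of elements of a max-closed set is in the set -/
theorem sup'_mem_aux {q : ℕ} {Ei : Fin q → Type} [∀ i, LinearOrder (Ei i)]
    {𝒮 : Set (∀ i, Ei i)}
    (hmax : ∀ X ∈ 𝒮, ∀ Y ∈ 𝒮, (fun i => max (X i) (Y i)) ∈ 𝒮)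
    (s : Finset {x // x ∈ 𝒮}) (hs : s.Nonempty) :
    (fun i => s.sup' hs (fun Y => Y.1 i)) ∈ 𝒮 := by
  induction hs using Finset.Nonempty.cons_induction with
  | singleton b =>
      have : (fun i => ({b} : Finset _).sup' (Finset.singleton_nonempty b) (fun Y => Y.1 i))
          = b.1 := by
        funext i; rw [Finset.sup'_singleton]
      rw [this]; exact b.2
  | cons b s hbs hs ih =>
      have : (fun i => (Finset.cons b s hbs).sup' (Finset.cons_nonempty hbs) (fun Y => Y.1 i))
          = fun i => max (b.1 i) (s.sup' hs (fun Y => Y.1 i)) := by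
        funext i; rw [Finset.sup'_cons]
      rw [this]
      exact hmax b.1 b.2 _ ih

open Classical in
theorem inf'_mem_aux {q : ℕ} {Ei : Fin q → Type} [∀ i, LinearOrder (Ei i)]
    {𝒮 : Set (∀ i, Ei i)}
    (hmin : ∀ X ∈ 𝒮, ∀ Y ∈ 𝒮, (fun i => min (X i) (Y i)) ∈ 𝒮)
    (s : Finset {x // x ∈ 𝒮}) (hs : s.Nonempty) :
    (fun i => s.inf' hs (fun Y => Y.1 i)) ∈ 𝒮 := by
  induction hs using Finset.Nonempty.cons_induction with
  | singleton b =>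
      have : (fun i => ({b} : Finset _).inf' (Finset.singleton_nonempty b) (fun Y => Y.1 i))
          = b.1 := by
        funext i; rw [Finset.inf'_singleton]
      rw [this]; exact b.2
  | cons b s hbs hs ih =>
      have : (fun i => (Finset.cons b s hbs).inf' (Finset.cons_nonempty hbs) (fun Y => Y.1 i))
          = fun i => min (b.1 i) (s.inf' hs (fun Y => Y.1 i)) := by
        funext i; rw [Finset.inf'_cons]
      rw [this]
      exact hmin b.1 b.2 _ ih

section pick

variable {q : ℕ} {Ei : Fin q → Type} [∀ i, LinearOrder (Ei i)]
  (𝒮 : Set (∀ i, Ei i)) [Fintype {x // x ∈ 𝒮}]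
  (hmin : ∀ X ∈ 𝒮, ∀ Y ∈ 𝒮, (fun i => min (X i) (Y i)) ∈ 𝒮)
  (B : ∀ i, Ei i) (hB : B ∈ 𝒮)

open Classical in
/-- the endpoint assignment: `⊥` if the minimum `B` satisfies `c` at coordinate `i`,
the minimum of the filter `{Y | c (Y i)}` if it is nonempty, `⊤` otherwise. -/
noncomputable def pick (i : Fin q) (c : Ei i → Prop) :
    WithBot (WithTop {x // x ∈ 𝒮}) :=
  if (⟨B, hB⟩ : {x // x ∈ 𝒮}) ∈ Finset.univ.filter (fun Y : {x // x ∈ 𝒮} => c (Y.1 i)) then ⊥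
  else if h : (Finset.univ.filter (fun Y : {x // x ∈ 𝒮} => c (Y.1 i))).Nonempty then
    (((⟨_, inf'_mem_aux hmin _ h⟩ : {x // x ∈ 𝒮}) : WithTop {x // x ∈ 𝒮}) :
      WithBot (WithTop {x // x ∈ 𝒮}))
  else ⊤

open Classical in
theorem pick_mono (i : Fin q) (c c' : Ei i → Prop) (hcc : ∀ x, c' x → c x) :
    pick 𝒮 hmin B hB i c ≤ pick 𝒮 hmin B hB i c' := by
  unfold pick
  by_cases h1 : (⟨B, hB⟩ : {x // x ∈ 𝒮}) ∈ Finset.univ.filter (fun Y : {x // x ∈ 𝒮} => c (Y.1 i))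
  · simp [h1]
  · have h1' : (⟨B, hB⟩ : {x // x ∈ 𝒮}) ∉
        Finset.univ.filter (fun Y : {x // x ∈ 𝒮} => c' (Y.1 i)) := by
      intro h; exact h1 (by
        simp only [Finset.mem_filter, Finset.mem_univ, true_and] at h ⊢
        exact hcc _ h)
    rw [if_neg h1, if_neg h1']
    by_cases h2 : (Finset.univ.filter (fun Y : {x // x ∈ 𝒮} => c' (Y.1 i))).Nonempty
    · have hsub : (Finset.univ.filter (fun Y : {x // x ∈ 𝒮} => c' (Y.1 i))) ⊆
          (Finset.univ.filter (fun Y : {x // x ∈ 𝒮} => c (Y.1 i))) := by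
        intro Y hY
        simp only [Finset.mem_filter, Finset.mem_univ, true_and] at hY ⊢
        exact hcc _ hY
      have h2' : (Finset.univ.filter (fun Y : {x // x ∈ 𝒮} => c (Y.1 i))).Nonempty :=
        h2.mono hsub
      rw [dif_pos h2, dif_pos h2']
      rw [WithBot.coe_le_coe, WithTop.coe_le_coe]
      refine Subtype.mk_le_mk.2 (fun i' => ?_)
      obtain ⟨Y, hY, hYe⟩ := Finset.exists_mem_eq_inf'
        h2 (fun Y : {x // x ∈ 𝒮} => Y.1 i')
      rw [hYe]
      exact Finset.inf'_le _ (hsub hY)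
    · rw [dif_neg h2]
      exact le_top

open Classical in
theorem pick_spec (hBle : ∀ Y : {x // x ∈ 𝒮}, ∀ i, B i ≤ Y.1 i)
    (I : Set (WithBot (WithTop {x // x ∈ 𝒮})))
    (hI : IsIdealRel (· ≤ ·) ⊥ ⊤ I)
    (s : Finset {x // x ∈ 𝒮}) (hs : s.Nonempty)
    (hBs : (⟨B, hB⟩ : {x // x ∈ 𝒮}) ∈ s)
    (hsI : ∀ Y ∈ s, Y = (⟨B, hB⟩ : {x // x ∈ 𝒮}) ∨ ((Y : WithTop {x // x ∈ 𝒮}) : WithBot (WithTop {x // x ∈ 𝒮})) ∈ I)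
    (hIs : ∀ Y : {x // x ∈ 𝒮}, ((Y : WithTop {x // x ∈ 𝒮}) : WithBot (WithTop {x // x ∈ 𝒮})) ∈ I → Y ∈ s)
    (i : Fin q) (c : Ei i → Prop) (hc : ∀ x y : Ei i, x ≤ y → c x → c y) :
    pick 𝒮 hmin B hB i c ∈ I ∪ {⊥} ↔ c (s.sup' hs (fun Y => Y.1 i)) := by
  unfold pick
  by_cases h1 : (⟨B, hB⟩ : {x // x ∈ 𝒮}) ∈ Finset.univ.filter (fun Y : {x // x ∈ 𝒮} => c (Y.1 i))
  · rw [if_pos h1]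
    simp only [Finset.mem_filter, Finset.mem_univ, true_and] at h1
    constructor
    · intro _; exact hc _ _ (Finset.le_sup' (fun Y : {x // x ∈ 𝒮} => Y.1 i) hBs) h1
    · intro _; exact Or.inr rfl
  · rw [if_neg h1]
    by_cases h2 : (Finset.univ.filter (fun Y : {x // x ∈ 𝒮} => c (Y.1 i))).Nonempty
    · rw [dif_pos h2]
      constructor
      · intro hm
        have hmI : (((⟨_, inf'_mem_aux hmin _ h2⟩ : {x // x ∈ 𝒮}) :
            WithTop {x // x ∈ 𝒮}) : WithBot (WithTop {x // x ∈ 𝒮})) ∈ I := by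
          rcases hm with hm | hm
          · exact hm
          · exact absurd hm WithBot.coe_ne_bot
        have hms := hIs _ hmI
        obtain ⟨Y, hY, hYe⟩ := Finset.exists_mem_eq_inf' h2 (fun Y : {x // x ∈ 𝒮} => Y.1 i)
        simp only [Finset.mem_filter, Finset.mem_univ, true_and] at hY
        refine hc _ _ (Finset.le_sup' (fun Y : {x // x ∈ 𝒮} => Y.1 i) hms) ?_
        show c ((Finset.univ.filter (fun Y : {x // x ∈ 𝒮} => c (Y.1 i))).inf' h2
          (fun Y => Y.1 i))
        rw [hYe]; exact hY
      · intro hcz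
        obtain ⟨Y, hY, hYe⟩ := Finset.exists_mem_eq_sup' hs (fun Y : {x // x ∈ 𝒮} => Y.1 i)
        rw [hYe] at hcz
        have hYF : Y ∈ Finset.univ.filter (fun Y : {x // x ∈ 𝒮} => c (Y.1 i)) := by
          simp only [Finset.mem_filter, Finset.mem_univ, true_and]; exact hcz
        have hYI : ((Y : WithTop {x // x ∈ 𝒮}) : WithBot (WithTop {x // x ∈ 𝒮})) ∈ I := by
          rcases hsI Y hY with h | h
          · exact absurd (h ▸ hYF) h1
          · exact h
        left
        refine hI.2 _ _ hYI ?_ WithBot.coe_ne_bot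
        show _ ≤ _
        rw [WithBot.coe_le_coe, WithTop.coe_le_coe]
        exact Subtype.mk_le_mk.2 (fun i' => Finset.inf'_le _ hYF)
    · rw [dif_neg h2]
      constructor
      · intro h
        rcases h with h | h
        · exact absurd rfl (hI.1 _ h).2
        · simp only [Set.mem_singleton_iff] at h
          rw [← WithBot.coe_top] at h
          exact absurd h WithBot.coe_ne_bot
      · intro hcz
        exfalso
        obtain ⟨Y, hY, hYe⟩ := Finset.exists_mem_eq_sup' hs (fun Y : {x // x ∈ 𝒮} => Y.1 i)
        rw [hYe] at hcz
        exact h2 ⟨Y, by simp only [Finset.mem_filter, Finset.mem_univ, true_and]; exact hcz⟩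

end pick

/-- Let `𝒮` be a nonempty sublattice of a product of `q` finite
nonempty total orders. Then every member of `𝒮` (identified with a `q`-element subset of
the disjoint union `E = E₁ ⊔ ⋯ ⊔ E_q`) has size exactly `q`, and there exist a finite
poset `(P, ⪯)` with minimum `⊥` and maximum `⊤`, `⊥ ≠ ⊤`, and a map `r : E → P × P`,
`r e = (e⁺, e⁻)` with `e⁺ ⪯ e⁻`, such that `𝒮` equals
`{ sup_r(I) : I an ideal of P* }`. -/
theorem stmt_15 (q : ℕ) (hq : 0 < q) (Ei : Fin q → Type)
    [∀ i, Fintype (Ei i)] [∀ i, Nonempty (Ei i)] [∀ i, LinearOrder (Ei i)]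
    (𝒮 : Set (∀ i, Ei i)) (hne : 𝒮.Nonempty)
    (hmin : ∀ X ∈ 𝒮, ∀ Y ∈ 𝒮, (fun i => min (X i) (Y i)) ∈ 𝒮)
    (hmax : ∀ X ∈ 𝒮, ∀ Y ∈ 𝒮, (fun i => max (X i) (Y i)) ∈ 𝒮) :
    (∀ X ∈ 𝒮, (Set.range fun i => (⟨i, X i⟩ : Σ i, Ei i)).ncard = q) ∧
    ∃ (P : Type) (_ : Fintype P) (le : P → P → Prop) (_ : IsPartialOrder P le)
      (bot top : P) (r : (Σ i, Ei i) → P × P),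
      (∀ x : P, le bot x) ∧ (∀ x : P, le x top) ∧ bot ≠ top ∧
      (∀ e : Σ i, Ei i, le (r e).1 (r e).2) ∧
      {S : Set (Σ i, Ei i) | ∃ X ∈ 𝒮, S = Set.range fun i => (⟨i, X i⟩ : Σ i, Ei i)} =
        {S : Set (Σ i, Ei i) | ∃ I : Set P, IsIdealRel le bot top I ∧
          S = {e | (r e).1 ∈ I ∪ {bot} ∧ (r e).2 ∉ I ∪ {bot}}} := by
  classical
  constructor
  · intro X hX
    have hinj : Function.Injective (fun i => (⟨i, X i⟩ : Σ i, Ei i)) :=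
      fun i j h => congrArg Sigma.fst h
    rw [← Set.image_univ, Set.ncard_image_of_injective _ hinj, Set.ncard_univ,
      Nat.card_eq_fintype_card, Fintype.card_fin]
  haveI : Fintype {x // x ∈ 𝒮} := (Set.toFinite 𝒮).fintype
  haveI : Nonempty {x // x ∈ 𝒮} := hne.to_subtype
  set S := {x // x ∈ 𝒮} with hSdef
  haveI : Fintype (WithTop S) := instFintypeOption
  haveI : Fintype (WithBot (WithTop S)) := instFintypeOption
  have hu : (Finset.univ : Finset S).Nonempty := Finset.univ_nonempty
  set B : ∀ i, Ei i := fun i => Finset.univ.inf' hu (fun Y : S => Y.1 i) with hBdef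
  have hB : B ∈ 𝒮 := inf'_mem_aux hmin _ hu
  have hBle : ∀ Y : S, ∀ i, B i ≤ Y.1 i := fun Y i => Finset.inf'_le _ (Finset.mem_univ Y)
  -- range membership characterization
  have hrange : ∀ (X : ∀ i, Ei i) (e : Σ i, Ei i),
      e ∈ Set.range (fun i => (⟨i, X i⟩ : Σ i, Ei i)) ↔ X e.1 = e.2 := by
    intro X e
    constructor
    · rintro ⟨j, rfl⟩; rfl
    · intro h
      rcases e with ⟨i, a⟩
      refine ⟨i, ?_⟩
      show (⟨i, X i⟩ : Σ j, Ei j) = ⟨i, a⟩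
      simp only at h
      rw [h]
  refine ⟨WithBot (WithTop S), inferInstance, (· ≤ ·), inferInstance, ⊥, ⊤,
    fun e => (pick 𝒮 hmin B hB e.1 (fun x => e.2 ≤ x), pick 𝒮 hmin B hB e.1 (fun x => e.2 < x)),
    fun x => bot_le, fun x => le_top, ?_, ?_, ?_⟩
  · rw [← WithBot.coe_top]; exact WithBot.bot_ne_coe
  · intro e
    exact pick_mono 𝒮 hmin B hB e.1 _ _ (fun x hx => le_of_lt hx)
  · ext A
    simp only [Set.mem_setOf_eq]
    constructor
    · rintro ⟨X, hX, rfl⟩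
      refine ⟨{p : WithBot (WithTop S) | ∃ Y : S, p = ((Y : WithTop S) : WithBot (WithTop S)) ∧ Y.1 ≤ X}, ?_, ?_⟩
      · constructor
        · rintro x ⟨Y, rfl, -⟩
          refine ⟨WithBot.coe_ne_bot, ?_⟩
          rw [← WithBot.coe_top]
          intro h
          exact WithTop.coe_ne_top (WithBot.coe_inj.1 h)
        · rintro u v ⟨Y, rfl, hYX⟩ huv hub
          induction u with
          | bot => exact absurd rfl hub
          | coe w =>
            rw [WithBot.coe_le_coe] at huv
            induction w with
            | top => exact absurd (top_le_iff.1 huv) WithTop.coe_ne_top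
            | coe Z =>
              rw [WithTop.coe_le_coe] at huv
              exact ⟨Z, rfl, le_trans huv hYX⟩
      · -- compute the sup set
        set I : Set (WithBot (WithTop S)) := {p : WithBot (WithTop S) | ∃ Y : S, p = ((Y : WithTop S) : WithBot (WithTop S)) ∧ Y.1 ≤ X} with hIdef
        have hI : IsIdealRel (P := WithBot (WithTop S)) (· ≤ ·) ⊥ ⊤ I := by
          constructor
          · rintro x ⟨Y, rfl, -⟩
            refine ⟨WithBot.coe_ne_bot, ?_⟩
            rw [← WithBot.coe_top]
            intro h
            exact WithTop.coe_ne_top (WithBot.coe_inj.1 h)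
          · rintro u v ⟨Y, rfl, hYX⟩ huv hub
            induction u with
            | bot => exact absurd rfl hub
            | coe w =>
              rw [WithBot.coe_le_coe] at huv
              induction w with
              | top => exact absurd (top_le_iff.1 huv) WithTop.coe_ne_top
              | coe Z =>
                rw [WithTop.coe_le_coe] at huv
                exact ⟨Z, rfl, le_trans huv hYX⟩
        set s : Finset S := insert ⟨B, hB⟩
          (Finset.univ.filter (fun Y : S => ((Y : WithTop S) : WithBot (WithTop S)) ∈ I)) with hsdef
        have hs : s.Nonempty := Finset.insert_nonempty _ _
        have hBs : (⟨B, hB⟩ : S) ∈ s := Finset.mem_insert_self _ _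
        have hsI : ∀ Y ∈ s, Y = (⟨B, hB⟩ : S) ∨ ((Y : WithTop S) : WithBot (WithTop S)) ∈ I := by
          intro Y hY
          rcases Finset.mem_insert.1 hY with h | h
          · exact Or.inl h
          · exact Or.inr (Finset.mem_filter.1 h).2
        have hIs : ∀ Y : S, ((Y : WithTop S) : WithBot (WithTop S)) ∈ I → Y ∈ s := by
          intro Y hY
          exact Finset.mem_insert_of_mem (Finset.mem_filter.2 ⟨Finset.mem_univ _, hY⟩)
        have hZX : ∀ i, s.sup' hs (fun Y : S => Y.1 i) = X i := by
          intro i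
          apply le_antisymm
          · apply Finset.sup'_le
            intro Y hY
            rcases hsI Y hY with h | h
            · rw [h]; exact hBle ⟨X, hX⟩ i
            · obtain ⟨Z, hZ, hZX⟩ := h
              have : Y = Z := by
                rwa [WithBot.coe_inj, WithTop.coe_inj] at hZ
              rw [this]; exact hZX i
          · exact Finset.le_sup' (fun Y : S => Y.1 i)
              (hIs ⟨X, hX⟩ ⟨⟨X, hX⟩, rfl, le_refl _⟩)
        ext e
        rw [hrange X e]
        have h1 := pick_spec 𝒮 hmin B hB hBle I hI s hs hBs hsI hIs e.1
          (fun x => e.2 ≤ x) (fun x y hxy h => le_trans h hxy)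
        have h2 := pick_spec 𝒮 hmin B hB hBle I hI s hs hBs hsI hIs e.1
          (fun x => e.2 < x) (fun x y hxy h => lt_of_lt_of_le h hxy)
        simp only [Set.mem_setOf_eq, h1, h2, hZX]
        constructor
        · intro h; exact ⟨le_of_eq ((hZX e.1).trans h).symm,
            fun hlt => lt_irrefl _ (lt_of_lt_of_eq hlt ((hZX e.1).trans h))⟩
        · rintro ⟨hle, hnlt⟩; exact (hZX e.1).symm.trans (le_antisymm (not_lt.1 hnlt) hle)
    · rintro ⟨I, hI, rfl⟩
      set s : Finset S := insert ⟨B, hB⟩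
        (Finset.univ.filter (fun Y : S => ((Y : WithTop S) : WithBot (WithTop S)) ∈ I)) with hsdef
      have hs : s.Nonempty := Finset.insert_nonempty _ _
      have hBs : (⟨B, hB⟩ : S) ∈ s := Finset.mem_insert_self _ _
      have hsI : ∀ Y ∈ s, Y = (⟨B, hB⟩ : S) ∨ ((Y : WithTop S) : WithBot (WithTop S)) ∈ I := by
        intro Y hY
        rcases Finset.mem_insert.1 hY with h | h
        · exact Or.inl h
        · exact Or.inr (Finset.mem_filter.1 h).2
      have hIs : ∀ Y : S, ((Y : WithTop S) : WithBot (WithTop S)) ∈ I → Y ∈ s := by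
        intro Y hY
        exact Finset.mem_insert_of_mem (Finset.mem_filter.2 ⟨Finset.mem_univ _, hY⟩)
      refine ⟨fun i => s.sup' hs (fun Y : S => Y.1 i), sup'_mem_aux hmax s hs, ?_⟩
      ext e
      rw [hrange]
      have h1 := pick_spec 𝒮 hmin B hB hBle I hI s hs hBs hsI hIs e.1
        (fun x => e.2 ≤ x) (fun x y hxy h => le_trans h hxy)
      have h2 := pick_spec 𝒮 hmin B hB hBle I hI s hs hBs hsI hIs e.1
        (fun x => e.2 < x) (fun x y hxy h => lt_of_lt_of_le h hxy)
      simp only [Set.mem_setOf_eq, h1, h2]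
      constructor
      · rintro ⟨hle, hnlt⟩; exact le_antisymm (not_lt.1 hnlt) hle
      · intro h; rw [h]; exact ⟨le_refl _, lt_irrefl _⟩
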